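/- The integral transform H(r)(k) = ∫₀ᵏ r(√(1-k²)/√(1-x²)) dx is injective on the space of continuous functions r: [0,1] → ℝ that are locally Lipschitz on [0,1): if H(r)(k) = 0 for all k ∈ [0,1], then r ≡ 0. -/

import Mathlib

open MeasureTheory Real


-- antiderivative for the inner (beta) integral
lemma hasDeriv_G {s u : ℝ} (hs : 0 < s) (hsu : s < u) {c : ℝ} (hc : c ∈ Set.Ioo s u) :
    HasDerivAt (fun c : ℝ => (1/2) * Real.arcsin ((2*c^2 - s^2 - u^2)/(u^2 - s^2)))
      (c / (Real.sqrt (c^2 - s^2) * Real.sqrt (u^2 - c^2))) c := by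
  obtain ⟨h1, h2⟩ := hc
  have hc0 : 0 < c := hs.trans h1
  have hA : 0 < c^2 - s^2 := by nlinarith
  have hB : 0 < u^2 - c^2 := by nlinarith
  have hD : 0 < u^2 - s^2 := by nlinarith
  set w : ℝ := (2*c^2 - s^2 - u^2)/(u^2 - s^2) with hw
  have hw1 : w < 1 := by
    rw [hw, div_lt_one hD]; nlinarith
  have hwm1 : -1 < w := by
    rw [hw, lt_div_iff₀ hD]; nlinarith
  have hinner : HasDerivAt (fun c : ℝ => (2*c^2 - s^2 - u^2)/(u^2 - s^2)) (4*c/(u^2-s^2)) c := by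
    have h : HasDerivAt (fun c : ℝ => 2*c^2 - s^2 - u^2) (2*(2*c)) c := by
      simpa using (((hasDerivAt_pow 2 c).const_mul 2).sub_const (s^2)).sub_const (u^2)
    refine (h.div_const (u^2 - s^2)).congr_deriv ?_
    ring
  have harc := (Real.hasDerivAt_arcsin (ne_of_gt hwm1) (ne_of_lt hw1)).comp c hinner
  have := harc.const_mul (1/2 : ℝ)
  refine this.congr_deriv ?_
  have hsq : Real.sqrt (1 - w^2) = 2 * Real.sqrt (c^2-s^2) * Real.sqrt (u^2-c^2) / (u^2 - s^2) := by
    rw [show (1 : ℝ) - w^2 = (2 * Real.sqrt (c^2-s^2) * Real.sqrt (u^2-c^2) / (u^2 - s^2))^2 by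
      rw [hw, div_pow, div_pow, mul_pow, mul_pow, Real.sq_sqrt hA.le, Real.sq_sqrt hB.le]
      field_simp
      ring]
    exact Real.sqrt_sq (by positivity)
  rw [hsq]
  have hsA := Real.sqrt_pos.2 hA
  have hsB := Real.sqrt_pos.2 hB
  field_simp
  ring

lemma inner_integrable {s u : ℝ} (hs : 0 < s) (hsu : s < u) :
    IntegrableOn (fun c => c / (Real.sqrt (c^2 - s^2) * Real.sqrt (u^2 - c^2))) (Set.Ioc s u) := by
  apply intervalIntegral.integrableOn_deriv_of_nonneg (g := fun c : ℝ =>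
    (1/2) * Real.arcsin ((2*c^2 - s^2 - u^2)/(u^2 - s^2)))
  · exact (continuous_const.mul (Real.continuous_arcsin.comp (by continuity))).continuousOn
  · exact fun c hc => hasDeriv_G hs hsu hc
  · intro c hc
    have h0 : 0 < c := hs.trans hc.1
    positivity

lemma inner_integral {s u : ℝ} (hs : 0 < s) (hsu : s < u) :
    ∫ c in Set.Ioc s u, c / (Real.sqrt (c^2 - s^2) * Real.sqrt (u^2 - c^2)) = Real.pi / 2 := by
  have hD : 0 < u^2 - s^2 := by nlinarith
  have := intervalIntegral.integral_eq_sub_of_hasDeriv_right_of_le (f := fun c : ℝ =>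
      (1/2) * Real.arcsin ((2*c^2 - s^2 - u^2)/(u^2 - s^2)))
      (f' := fun c => c / (Real.sqrt (c^2 - s^2) * Real.sqrt (u^2 - c^2))) hsu.le
      ((continuous_const.mul (Real.continuous_arcsin.comp (by continuity))).continuousOn)
      (fun c hc => (hasDeriv_G hs hsu hc).hasDerivWithinAt)
      ((intervalIntegrable_iff_integrableOn_Ioc_of_le hsu.le).2 (inner_integrable hs hsu))
  rw [intervalIntegral.integral_of_le hsu.le] at this
  rw [this]
  have e1 : (2*u^2 - s^2 - u^2)/(u^2 - s^2) = 1 := by field_simp; ring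
  have e2 : (2*s^2 - s^2 - u^2)/(u^2 - s^2) = -1 := by field_simp; ring
  simp only [e1, e2, Real.arcsin_one, Real.arcsin_neg]
  ring

lemma hasDeriv_psi {c : ℝ} (hc : 0 < c) {u : ℝ} (hu : u ∈ Set.Ioo c 1) :
    HasDerivAt (fun u : ℝ => Real.sqrt (1 - c^2/u^2))
      (c^2 / (u^2 * Real.sqrt (u^2 - c^2))) u := by
  obtain ⟨h1, h2⟩ := hu
  have hu0 : 0 < u := hc.trans h1
  have hB : 0 < u^2 - c^2 := by nlinarith
  have hin : 0 < 1 - c^2/u^2 := by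
    rw [sub_pos, div_lt_one (by positivity)]; nlinarith
  have hinner : HasDerivAt (fun u : ℝ => 1 - c^2/u^2) (2*c^2/u^3) u := by
    have h := ((hasDerivAt_const u (c^2)).div (hasDerivAt_pow 2 u)
      (by positivity)).const_sub 1
    refine h.congr_deriv ?_
    field_simp
    ring
  have h := (Real.hasDerivAt_sqrt (ne_of_gt hin)).comp u hinner
  refine h.congr_deriv ?_
  have hq : Real.sqrt (1 - c^2/u^2) = Real.sqrt (u^2 - c^2) / u := by
    rw [show 1 - c^2/u^2 = (u^2 - c^2)/u^2 by field_simp]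
    rw [Real.sqrt_div hB.le, Real.sqrt_sq hu0.le]
  rw [hq]
  have hs := Real.sqrt_pos.2 hB
  field_simp

lemma psi_sq {c u : ℝ} (hc : 0 < c) (hu : u ∈ Set.Icc c 1) :
    c / Real.sqrt (1 - (Real.sqrt (1 - c^2/u^2))^2) = u := by
  have hu0 : 0 < u := lt_of_lt_of_le hc hu.1
  have hle : c^2/u^2 ≤ 1 := by
    rw [div_le_one (by positivity)]; nlinarith [hu.1]
  rw [Real.sq_sqrt (by linarith), show 1 - (1 - c^2/u^2) = c^2/u^2 by ring,
    Real.sqrt_div (sq_nonneg c), Real.sqrt_sq hc.le, Real.sqrt_sq hu0.le]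
  field_simp

lemma subst_eq {ρ : ℝ → ℝ} (hρ : Continuous ρ) (C : ℝ) (hbd : ∀ x, ‖ρ x‖ ≤ C)
    (hzero : ∀ k ∈ Set.Icc (0:ℝ) 1,
      ∫ x in Set.Icc (0:ℝ) k, ρ (Real.sqrt (1-k^2) / Real.sqrt (1-x^2)) = 0)
    {c : ℝ} (hc : c ∈ Set.Ioo (0:ℝ) 1) :
    ∫ u in Set.Ioo c 1, (c^2 / (u^2 * Real.sqrt (u^2 - c^2))) * ρ u = 0 := by
  obtain ⟨hc0, hc1⟩ := hc
  have hc1le : c ≤ 1 := hc1.le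
  set ψ : ℝ → ℝ := fun u => Real.sqrt (1 - c^2/u^2) with hψ
  set ψ' : ℝ → ℝ := fun u => c^2 / (u^2 * Real.sqrt (u^2 - c^2)) with hψ'
  set g : ℝ → ℝ := fun x => ρ (c / Real.sqrt (1 - x^2)) with hg
  set k : ℝ := Real.sqrt (1 - c^2) with hk
  have hk2 : k^2 = 1 - c^2 := Real.sq_sqrt (by nlinarith)
  have hk0 : 0 ≤ k := Real.sqrt_nonneg _
  have hk1 : k < 1 := by
    rw [hk, Real.sqrt_lt' one_pos]
    nlinarith
  -- the hypothesis at k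
  have h0 : ∫ x in Set.Icc (0:ℝ) k, g x = 0 := by
    have hsk : Real.sqrt (1 - k^2) = c := by
      rw [hk2, show (1:ℝ) - (1-c^2) = c^2 by ring, Real.sqrt_sq hc0.le]
    have := hzero k ⟨hk0, hk1.le⟩
    rw [hsk] at this
    exact this
  -- continuity of ψ on Icc c 1
  have hψcont : ContinuousOn ψ (Set.Icc c 1) := by
    apply ContinuousOn.sqrt
    apply ContinuousOn.sub continuousOn_const
    apply ContinuousOn.div continuousOn_const (by fun_prop)
    intro u hu
    have : 0 < u := lt_of_lt_of_le hc0 hu.1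
    positivity
  -- image bounds
  have himg : ∀ u ∈ Set.Icc c 1, ψ u ∈ Set.Icc 0 k := by
    intro u hu
    have hu0 : 0 < u := lt_of_lt_of_le hc0 hu.1
    refine ⟨Real.sqrt_nonneg _, ?_⟩
    apply Real.sqrt_le_sqrt
    have : c^2 ≤ c^2/u^2 := by
      rw [le_div_iff₀ (by positivity)]
      have hu2 : u^2 ≤ 1 := by nlinarith [hu.2]
      nlinarith [sq_nonneg c, hu2]
    linarith
  -- continuity of g on Icc 0 k
  have hgcont : ContinuousOn g (Set.Icc 0 k) := by
    apply hρ.comp_continuousOn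
    apply ContinuousOn.div continuousOn_const
    · apply ContinuousOn.sqrt
      fun_prop
    · intro x hx
      have : x^2 < 1 := by nlinarith [hx.1, hx.2]
      have : 0 < 1 - x^2 := by linarith
      positivity
  have huIcc : Set.uIcc c 1 = Set.Icc c 1 := Set.uIcc_of_le hc1le
  -- integrability of ψ' on Icc c 1
  have hψ'int : IntegrableOn ψ' (Set.Icc c 1) := by
    rw [integrableOn_Icc_iff_integrableOn_Ioc]
    apply intervalIntegral.integrableOn_deriv_of_nonneg hψcont
    · exact fun u hu => hasDeriv_psi hc0 hu
    · intro u hu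
      have : 0 < u := hc0.trans hu.1
      positivity
  -- integrability of ψ' * ρ
  have hmulint : IntegrableOn (fun u => ρ u * ψ' u) (Set.Icc c 1) := by
    exact Integrable.bdd_mul hψ'int (hρ.aestronglyMeasurable.restrict) (Filter.Eventually.of_forall hbd)
  -- key pointwise identity
  have hkey : Set.EqOn (fun u => ψ' u • (g ∘ ψ) u) (fun u => ρ u * ψ' u) (Set.Icc c 1) := by
    intro u hu
    simp only [smul_eq_mul, Function.comp_apply, hg]
    rw [psi_sq hc0 hu]
    ring
  -- the substitution
  have hsub := intervalIntegral.integral_comp_smul_deriv''' (f := ψ) (f' := ψ')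
    (g := g) (a := c) (b := 1)
    (by rw [huIcc]; exact hψcont)
    (by
      rw [min_eq_left hc1le, max_eq_right hc1le]
      exact fun x hx => (hasDeriv_psi hc0 hx).hasDerivWithinAt)
    (by
      apply hgcont.mono
      rw [min_eq_left hc1le, max_eq_right hc1le]
      rintro y ⟨u, hu, rfl⟩
      exact himg u (Set.Ioo_subset_Icc_self hu))
    (by
      apply ContinuousOn.integrableOn_compact
      · rw [huIcc]; exact isCompact_Icc.image_of_continuousOn hψcont
      · apply hgcont.mono
        rw [huIcc]
        rintro y ⟨u, hu, rfl⟩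
        exact himg u hu)
    (by
      rw [huIcc]
      exact (hmulint.congr_fun hkey.symm measurableSet_Icc : _))
  have hψc : ψ c = 0 := by
    simp only [hψ]
    rw [div_self (by positivity), sub_self, Real.sqrt_zero]
  have hψ1 : ψ 1 = k := by simp [hψ, hk]
  rw [hψc, hψ1] at hsub
  -- RHS = 0
  have hrhs : ∫ x in (0:ℝ)..k, g x = 0 := by
    rw [intervalIntegral.integral_of_le hk0, ← MeasureTheory.integral_Icc_eq_integral_Ioc]
    exact h0
  rw [hrhs] at hsub
  -- LHS
  rw [intervalIntegral.integral_of_le hc1le] at hsub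
  rw [MeasureTheory.setIntegral_congr_fun measurableSet_Ioc
    (hkey.mono Set.Ioc_subset_Icc_self)] at hsub
  rw [MeasureTheory.integral_Ioc_eq_integral_Ioo] at hsub
  rw [show (fun u => (c^2 / (u^2 * Real.sqrt (u^2 - c^2))) * ρ u) = fun u => ρ u * ψ' u by
    funext u; rw [hψ']; ring]
  exact hsub
lemma fubini_step {ρ : ℝ → ℝ} (hρ : Continuous ρ) (C : ℝ) (hbd : ∀ x, ‖ρ x‖ ≤ C)
    (hzero : ∀ k ∈ Set.Icc (0:ℝ) 1,
      ∫ x in Set.Icc (0:ℝ) k, ρ (Real.sqrt (1-k^2) / Real.sqrt (1-x^2)) = 0)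
    {s : ℝ} (hs : s ∈ Set.Ioo (0:ℝ) 1) :
    ∫ u in Set.Ioo s 1, ρ u / u^2 = 0 := by
  obtain ⟨hs0, hs1⟩ := hs
  set T : Set (ℝ × ℝ) := {p | p.1 ∈ Set.Ioo s 1 ∧ p.2 ∈ Set.Ioo s p.1} with hT
  set f : ℝ × ℝ → ℝ := fun p =>
    (ρ p.1 / p.1^2) * (p.2 / (Real.sqrt (p.2^2 - s^2) * Real.sqrt (p.1^2 - p.2^2))) with hf
  set F : ℝ × ℝ → ℝ := T.indicator f with hF
  have hTopen : IsOpen T := by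
    apply IsOpen.inter
    · exact ((isOpen_lt continuous_const continuous_fst).inter
        (isOpen_lt continuous_fst continuous_const))
    · exact ((isOpen_lt continuous_const continuous_snd).inter
        (isOpen_lt continuous_snd continuous_fst))
  have hTmeas : MeasurableSet T := hTopen.measurableSet
  have hfmeas : Measurable f := by
    apply Measurable.mul
    · exact (hρ.measurable.comp measurable_fst).div ((measurable_fst.pow measurable_const))
    · exact measurable_snd.div
        ((Real.continuous_sqrt.measurable.comp
          ((measurable_snd.pow measurable_const).sub measurable_const)).mul
         (Real.continuous_sqrt.measurable.comp
          ((measurable_fst.pow measurable_const).sub (measurable_snd.pow measurable_const))))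
  have hFmeas : AEStronglyMeasurable F ((volume : Measure ℝ).prod volume) :=
    ((hfmeas.indicator hTmeas).stronglyMeasurable).aestronglyMeasurable
  -- slices in c for fixed u
  have h_in : ∀ u ∈ Set.Ioo s 1, ∀ c,
      F (u, c) = (Set.Ioo s u).indicator (fun c => f (u, c)) c := by
    intro u hu c
    by_cases hcu : c ∈ Set.Ioo s u
    · rw [hF, Set.indicator_of_mem (show (u,c) ∈ T from ⟨hu, hcu⟩),
        Set.indicator_of_mem hcu]
    · rw [hF, Set.indicator_of_notMem (fun h => hcu h.2), Set.indicator_of_notMem hcu]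
  have h_out : ∀ u, u ∉ Set.Ioo s 1 → ∀ c, F (u, c) = 0 := by
    intro u hu c
    rw [hF, Set.indicator_of_notMem (fun h => hu h.1)]
  -- slices in u for fixed c
  have h_cin : ∀ c ∈ Set.Ioo s 1, ∀ u,
      F (u, c) = (Set.Ioo c 1).indicator (fun u => f (u, c)) u := by
    intro c hc u
    by_cases huc : u ∈ Set.Ioo c 1
    · rw [hF, Set.indicator_of_mem
        (show (u,c) ∈ T from ⟨⟨hc.1.trans huc.1, huc.2⟩, ⟨hc.1, huc.1⟩⟩),
        Set.indicator_of_mem huc]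
    · rw [hF, Set.indicator_of_notMem (fun h => huc ⟨h.2.2, h.1.2⟩),
        Set.indicator_of_notMem huc]
  have h_cout : ∀ c, c ∉ Set.Ioo s 1 → ∀ u, F (u, c) = 0 := by
    intro c hc u
    rw [hF, Set.indicator_of_notMem (fun h => hc ⟨h.2.1, h.2.2.trans h.1.2⟩)]
  -- integrability of each u-slice
  have hslice : ∀ u, Integrable (fun c => F (u, c)) volume := by
    intro u
    by_cases hu : u ∈ Set.Ioo s 1
    · simp only [h_in u hu]
      rw [integrable_indicator_iff measurableSet_Ioo]
      have h1 := (inner_integrable hs0 hu.1).mono_set Set.Ioo_subset_Ioc_self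
      exact h1.const_mul (ρ u / u^2)
    · simp only [h_out u hu]
      exact integrable_zero _ _ _
  -- value of ∫ c, ‖F (u, c)‖
  have hnormint : ∀ u, (∫ c, ‖F (u, c)‖) =
      (Set.Ioo s 1).indicator (fun u => ‖ρ u / u^2‖ * (Real.pi/2)) u := by
    intro u
    by_cases hu : u ∈ Set.Ioo s 1
    · simp only [h_in u hu]
      rw [Set.indicator_of_mem hu]
      simp_rw [norm_indicator_eq_indicator_norm]
      rw [MeasureTheory.integral_indicator measurableSet_Ioo]
      have : ∀ c ∈ Set.Ioo s u, ‖f (u, c)‖ =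
          ‖ρ u / u^2‖ * (c / (Real.sqrt (c^2 - s^2) * Real.sqrt (u^2 - c^2))) := by
        intro c hc
        rw [hf, norm_mul]
        congr 1
        rw [Real.norm_of_nonneg]
        have h1 : (0:ℝ) < c := hs0.trans hc.1
        positivity
      rw [MeasureTheory.setIntegral_congr_fun measurableSet_Ioo this,
        MeasureTheory.integral_const_mul, ← MeasureTheory.integral_Ioc_eq_integral_Ioo,
        inner_integral hs0 hu.1]
    · simp only [h_out u hu]
      rw [Set.indicator_of_notMem hu]
      simp
  -- integrability of F
  have hFint : Integrable F ((volume : Measure ℝ).prod volume) := by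
    rw [show F = fun p : ℝ × ℝ => F (p.1, p.2) from rfl]
    apply (integrable_prod_iff hFmeas).2
    constructor
    · exact Filter.Eventually.of_forall hslice
    · apply MeasureTheory.Integrable.mono'
        (g := (Set.Ioo s 1).indicator (fun _ => (C / s^2) * (Real.pi/2)))
      · rw [integrable_indicator_iff measurableSet_Ioo]
        exact integrableOn_const measure_Ioo_lt_top.ne
      · exact hFmeas.norm.integral_prod_right'
      · apply Filter.Eventually.of_forall
        intro u
        rw [hnormint u]
        by_cases hu : u ∈ Set.Ioo s 1
        · rw [Set.indicator_of_mem hu, Set.indicator_of_mem hu]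
          have hu0 : 0 < u := hs0.trans hu.1
          have hC : ‖ρ u‖ ≤ C := hbd u
          have hCnn : 0 ≤ C := le_trans (norm_nonneg _) hC
          have h2 : s^2 ≤ u^2 := by nlinarith [hu.1]
          rw [Real.norm_of_nonneg (by positivity),
            norm_div, Real.norm_of_nonneg (by positivity : (0:ℝ) ≤ u^2)]
          gcongr
        · rw [Set.indicator_of_notMem hu, Set.indicator_of_notMem hu, norm_zero]
  -- the swap
  have hswap := MeasureTheory.integral_integral_swap (f := fun u c => F (u, c))
    (μ := volume) (ν := volume) (by exact hFint)
  have hrhs : ∀ c : ℝ, (∫ u, F (u, c)) = 0 := by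
    intro c
    by_cases hc : c ∈ Set.Ioo s 1
    · simp only [h_cin c hc]
      rw [MeasureTheory.integral_indicator measurableSet_Ioo]
      have hc0 : 0 < c := hs0.trans hc.1
      have hX : 0 < Real.sqrt (c^2 - s^2) := Real.sqrt_pos.2 (by nlinarith [hc.1])
      have heq : ∀ u ∈ Set.Ioo c 1, f (u, c) =
          (1 / (c * Real.sqrt (c^2 - s^2))) * ((c^2 / (u^2 * Real.sqrt (u^2 - c^2))) * ρ u) := by
        intro u hu
        have hu0 : 0 < u := hc0.trans hu.1
        have hY : 0 < Real.sqrt (u^2 - c^2) := Real.sqrt_pos.2 (by nlinarith [hu.1])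
        rw [hf]
        field_simp
      rw [MeasureTheory.setIntegral_congr_fun measurableSet_Ioo heq,
        MeasureTheory.integral_const_mul, subst_eq hρ C hbd hzero ⟨hc0, hc.2⟩, mul_zero]
    · simp only [h_cout c hc]
      exact integral_zero _ _
  have hlhs : ∀ u : ℝ, (∫ c, F (u, c)) =
      (Set.Ioo s 1).indicator (fun u => ρ u / u^2 * (Real.pi/2)) u := by
    intro u
    by_cases hu : u ∈ Set.Ioo s 1
    · simp only [h_in u hu]
      rw [MeasureTheory.integral_indicator measurableSet_Ioo, Set.indicator_of_mem hu, hf]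
      simp only
      rw [MeasureTheory.integral_const_mul, ← MeasureTheory.integral_Ioc_eq_integral_Ioo,
        inner_integral hs0 hu.1]
    · simp only [h_out u hu]
      rw [Set.indicator_of_notMem hu]
      exact integral_zero _ _
  simp only [hrhs, hlhs, integral_zero] at hswap
  rw [MeasureTheory.integral_indicator measurableSet_Ioo,
    MeasureTheory.integral_mul_const] at hswap
  rcases mul_eq_zero.1 hswap with h | h
  · exact h
  · exact absurd h (by positivity)

lemma interval_zero {ρ : ℝ → ℝ} (hρ : Continuous ρ)
    (hint : ∀ s ∈ Set.Ioo (0:ℝ) 1, ∫ u in Set.Ioo s 1, ρ u / u^2 = 0)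
    {a b : ℝ} (ha : 0 < a) (hab : a ≤ b) (hb : b < 1) :
    ∫ u in a..b, ρ u / u^2 = 0 := by
  have hb0 : 0 < b := lt_of_lt_of_le ha hab
  have hcont : ContinuousOn (fun u => ρ u / u^2) (Set.Icc a 1) := by
    apply ContinuousOn.div hρ.continuousOn (by fun_prop)
    intro u hu
    have : 0 < u := lt_of_lt_of_le ha hu.1
    positivity
  have hi1 : IntegrableOn (fun u => ρ u / u^2) (Set.Icc a 1) :=
    hcont.integrableOn_compact isCompact_Icc
  have hsplit : Set.Ioo a 1 = Set.Ioc a b ∪ Set.Ioo b 1 := by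
    rw [Set.Ioc_union_Ioo_eq_Ioo hab hb]
  have hdisj : Disjoint (Set.Ioc a b) (Set.Ioo b 1) := by
    apply Set.disjoint_left.2
    rintro u ⟨_, h2⟩ ⟨h3, _⟩
    exact absurd (h2.trans_lt h3) (lt_irrefl u)
  have hu1 := MeasureTheory.setIntegral_union hdisj measurableSet_Ioo
    (hi1.mono_set (fun u hu => ⟨hu.1.le, hu.2.trans hb.le⟩))
    (hi1.mono_set (fun u hu => ⟨(hab.trans_lt hu.1).le, hu.2.le⟩))
    (f := fun u => ρ u / u^2)
  rw [← hsplit, hint a ⟨ha, hab.trans_lt hb⟩, hint b ⟨hb0, hb⟩] at hu1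
  rw [intervalIntegral.integral_of_le hab]
  linarith

lemma vanish_nonpos {ρ : ℝ → ℝ} (hρ : Continuous ρ)
    (hint : ∀ s ∈ Set.Ioo (0:ℝ) 1, ∫ u in Set.Ioo s 1, ρ u / u^2 = 0)
    {x : ℝ} (hx : x ∈ Set.Ioo (0:ℝ) 1) : ¬ (0 < ρ x / x^2) := by
  intro hpos
  have hca : ContinuousAt (fun u => ρ u / u^2) x := by
    apply ContinuousAt.div hρ.continuousAt (by fun_prop)
    have := hx.1; positivity
  have hmem : Set.Ioo (0:ℝ) 1 ∩ (fun u => ρ u / u^2) ⁻¹' Set.Ioi 0 ∈ nhds x := by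
    apply Filter.inter_mem (isOpen_Ioo.mem_nhds hx)
    exact hca.preimage_mem_nhds (Ioi_mem_nhds hpos)
  obtain ⟨l, v, hxlv, hsub⟩ := mem_nhds_iff_exists_Ioo_subset.1 hmem
  set a := (l + x)/2 with haa
  set b := (x + v)/2 with hbb
  have hla : l < a := by rw [haa]; linarith [hxlv.1]
  have hax : a < x := by rw [haa]; linarith [hxlv.1]
  have hxb : x < b := by rw [hbb]; linarith [hxlv.2]
  have hbv : b < v := by rw [hbb]; linarith [hxlv.2]
  have haIoo : a ∈ Set.Ioo l v := ⟨hla, hax.trans hxb |>.trans hbv⟩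
  have hbIoo : b ∈ Set.Ioo l v := ⟨hla.trans (hax.trans hxb), hbv⟩
  have ha0 : 0 < a := (hsub haIoo).1.1
  have hb1 : b < 1 := (hsub hbIoo).1.2
  have hfi : IntervalIntegrable (fun u => ρ u / u^2) volume a b := by
    apply ContinuousOn.intervalIntegrable
    apply ContinuousOn.div hρ.continuousOn (by fun_prop)
    intro u hu
    rw [Set.uIcc_of_le (hax.trans hxb).le] at hu
    have : 0 < u := lt_of_lt_of_le ha0 hu.1
    positivity
  have hposint := intervalIntegral.intervalIntegral_pos_of_pos_on hfi
    (fun u hu => (hsub ⟨hla.trans hu.1, hu.2.trans hbv⟩).2) (hax.trans hxb)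
  rw [interval_zero hρ hint ha0 (hax.trans hxb).le hb1] at hposint
  exact lt_irrefl 0 hposint

lemma vanish {ρ : ℝ → ℝ} (hρ : Continuous ρ)
    (hint : ∀ s ∈ Set.Ioo (0:ℝ) 1, ∫ u in Set.Ioo s 1, ρ u / u^2 = 0)
    {x : ℝ} (hx : x ∈ Set.Ioo (0:ℝ) 1) : ρ x = 0 := by
  have h1 := vanish_nonpos hρ hint hx
  have h2 := vanish_nonpos (ρ := fun u => -ρ u) (hρ.neg)
    (fun s hs => by
      rw [show (fun u => -ρ u / u^2) = fun u => -(ρ u / u^2) by funext u; ring]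
      rw [MeasureTheory.integral_neg, hint s hs, neg_zero]) hx
  simp only [neg_div] at h2
  have hx2 : 0 < x^2 := by have := hx.1; positivity
  have : ρ x / x^2 = 0 := by
    rcases lt_trichotomy (ρ x / x^2) 0 with h | h | h
    · exact absurd (by linarith : 0 < -(ρ x / x^2)) h2
    · exact h
    · exact absurd h h1
  field_simp at this
  exact (div_eq_zero_iff.1 this).resolve_right hx2.ne'

/-- The integral transform `H(r)(k) = ∫₀ᵏ r(√(1-k²)/√(1-x²)) dx` is injective on the
space of continuous functions `r : [0,1] → ℝ` that are locally Lipschitz on `[0,1)`: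
if `H(r)(k) = 0` for all `k ∈ [0,1]`, then `r ≡ 0` on `[0,1]`. -/
theorem integral_transform_injective (r : ℝ → ℝ)
    (hcont : ContinuousOn r (Set.Icc 0 1))
    (hlip : ∀ b : ℝ, b < 1 → ∃ K : NNReal, LipschitzOnWith K r (Set.Icc 0 b))
    (hzero : ∀ k ∈ Set.Icc (0 : ℝ) 1,
      ∫ x in Set.Icc (0 : ℝ) k, r (Real.sqrt (1 - k ^ 2) / Real.sqrt (1 - x ^ 2)) = 0) :
    ∀ x ∈ Set.Icc (0 : ℝ) 1, r x = 0 := by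
  set ρ : ℝ → ℝ := fun x => r (min 1 (max 0 x)) with hρdef
  have hclamp : ∀ x : ℝ, min 1 (max 0 x) ∈ Set.Icc (0:ℝ) 1 :=
    fun x => ⟨le_min zero_le_one (le_max_left 0 x), min_le_left 1 _⟩
  have hρ : Continuous ρ := by
    apply hcont.comp_continuous (continuous_const.min (continuous_const.max continuous_id)) hclamp
  have heq : ∀ y ∈ Set.Icc (0:ℝ) 1, ρ y = r y := by
    intro y hy
    rw [hρdef]
    simp only [max_eq_right hy.1, min_eq_right hy.2]
  obtain ⟨C, hC⟩ := isCompact_Icc.exists_bound_of_continuousOn hcont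
  have hbd : ∀ x, ‖ρ x‖ ≤ C := fun x => hC _ (hclamp x)
  -- transferred hypothesis
  have hzero' : ∀ k ∈ Set.Icc (0:ℝ) 1,
      ∫ x in Set.Icc (0:ℝ) k, ρ (Real.sqrt (1 - k^2) / Real.sqrt (1 - x^2)) = 0 := by
    intro k hk
    have hptwise : ∀ x ∈ Set.Icc (0:ℝ) k,
        ρ (Real.sqrt (1 - k^2) / Real.sqrt (1 - x^2)) =
        r (Real.sqrt (1 - k^2) / Real.sqrt (1 - x^2)) := by
      intro x hx
      have hargmem : Real.sqrt (1 - k^2) / Real.sqrt (1 - x^2) ∈ Set.Icc (0:ℝ) 1 := by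
        constructor
        · exact div_nonneg (Real.sqrt_nonneg _) (Real.sqrt_nonneg _)
        · by_cases h : Real.sqrt (1 - x^2) = 0
          · rw [h, div_zero]; exact zero_le_one
          · have hpos : 0 < Real.sqrt (1 - x^2) :=
              lt_of_le_of_ne (Real.sqrt_nonneg _) (Ne.symm h)
            rw [div_le_one hpos]
            apply Real.sqrt_le_sqrt
            have h1 : 0 ≤ x := hx.1
            have h2 : x ≤ k := hx.2
            nlinarith
      exact heq _ hargmem
    rw [MeasureTheory.setIntegral_congr_fun measurableSet_Icc hptwise]
    exact hzero k hk
  -- main deduction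
  have hvanish : ∀ x ∈ Set.Ioo (0:ℝ) 1, ρ x = 0 := by
    intro x hx
    apply vanish hρ _ hx
    intro s hs
    exact fubini_step hρ C hbd hzero' hs
  -- endpoints
  have hρ0 : ρ 0 = 0 := by
    have hne : (nhdsWithin (0:ℝ) (Set.Ioi 0)).NeBot := nhdsGT_neBot 0
    have hev : (fun u => ρ u) =ᶠ[nhdsWithin (0:ℝ) (Set.Ioi 0)] fun _ => 0 := by
      have hIoo : Set.Ioo (0:ℝ) 1 ∈ nhdsWithin (0:ℝ) (Set.Ioi 0) := by
        rw [show Set.Ioo (0:ℝ) 1 = Set.Ioi 0 ∩ Set.Iio 1 from rfl]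
        exact Filter.inter_mem self_mem_nhdsWithin
          (mem_nhdsWithin_of_mem_nhds (Iio_mem_nhds one_pos))
      filter_upwards [hIoo] with u hu
      exact hvanish u hu
    have h1 : Filter.Tendsto ρ (nhdsWithin (0:ℝ) (Set.Ioi 0)) (nhds (ρ 0)) :=
      (hρ.tendsto 0).mono_left nhdsWithin_le_nhds
    have h2 : Filter.Tendsto ρ (nhdsWithin (0:ℝ) (Set.Ioi 0)) (nhds 0) :=
      Filter.Tendsto.congr' hev.symm tendsto_const_nhds
    exact tendsto_nhds_unique h1 h2
  have hρ1 : ρ 1 = 0 := by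
    have hne : (nhdsWithin (1:ℝ) (Set.Iio 1)).NeBot := nhdsLT_neBot 1
    have hev : (fun u => ρ u) =ᶠ[nhdsWithin (1:ℝ) (Set.Iio 1)] fun _ => 0 := by
      have hIoo : Set.Ioo (0:ℝ) 1 ∈ nhdsWithin (1:ℝ) (Set.Iio 1) := by
        rw [show Set.Ioo (0:ℝ) 1 = Set.Iio 1 ∩ Set.Ioi 0 by
          ext u; simp [Set.mem_Ioo, and_comm]]
        exact Filter.inter_mem self_mem_nhdsWithin
          (mem_nhdsWithin_of_mem_nhds (Ioi_mem_nhds one_pos))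
      filter_upwards [hIoo] with u hu
      exact hvanish u hu
    have h1 : Filter.Tendsto ρ (nhdsWithin (1:ℝ) (Set.Iio 1)) (nhds (ρ 1)) :=
      (hρ.tendsto 1).mono_left nhdsWithin_le_nhds
    have h2 : Filter.Tendsto ρ (nhdsWithin (1:ℝ) (Set.Iio 1)) (nhds 0) :=
      Filter.Tendsto.congr' hev.symm tendsto_const_nhds
    exact tendsto_nhds_unique h1 h2
  intro x hx
  rw [← heq x hx]
  rcases eq_or_lt_of_le hx.1 with h0 | h0
  · rw [← h0]; exact hρ0
  rcases eq_or_lt_of_le hx.2 with h1 | h1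
  · rw [h1]; exact hρ1
  exact hvanish x ⟨h0, h1⟩
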